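/- arXiv:math/0510585 — 3 statements merged into one kernel-verified Lean document; each statement's English description precedes it below -/
import Mathlib

section
/- For every real x > 0, ψ(x+1) - ln(x + 1/2) lies strictly between P(x) and P(x) + 143/(30720x⁸), where P(x) = 1/(24x²) - 1/(24x³) + 23/(960x⁴) - 1/(160x⁵) - 11/(8064x⁶) - 1/(896x⁷). -/
noncomputable def digamma (x : ℝ) : ℝ := deriv (fun y => Real.log (Real.Gamma y)) x

open Real Set Filter Topology

lemma diffAt_logGamma {x : ℝ} (hx : 0 < x) :
    DifferentiableAt ℝ (fun y => Real.log (Real.Gamma y)) x :=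
  (Real.differentiableAt_Gamma fun m =>
    ((neg_nonpos.mpr (Nat.cast_nonneg m)).trans_lt hx).ne').log
    (Real.Gamma_pos_of_pos hx).ne'

lemma digamma_rec {x : ℝ} (hx : 0 < x) : digamma (x + 1) = digamma x + 1 / x := by
  have h_rec : ∀ y : ℝ, 0 < y → Real.log (Real.Gamma (y + 1)) = Real.log (Real.Gamma y) + Real.log y := by
    intro y hy
    rw [Real.Gamma_add_one hy.ne', Real.log_mul hy.ne' (Real.Gamma_pos_of_pos hy).ne', add_comm]
  unfold digamma
  rw [← deriv_comp_add_const, one_div, ← Real.deriv_log,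
    ← deriv_add (diffAt_logGamma hx) (Real.differentiableAt_log hx.ne')]
  apply Filter.EventuallyEq.deriv_eq
  filter_upwards [eventually_gt_nhds hx] using h_rec

lemma digamma_lb {x : ℝ} (hx : 0 < x) : Real.log x ≤ digamma (x + 1) := by
  have hc : ConvexOn ℝ (Ioi 0) (Real.log ∘ Real.Gamma) := Real.convexOn_log_Gamma
  have h := hc.slope_le_deriv (mem_Ioi.mpr hx) (mem_Ioi.mpr (by linarith : (0:ℝ) < x + 1))
    (by linarith) (by simpa [Function.comp_def] using diffAt_logGamma (by linarith : (0:ℝ) < x + 1))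
  rw [slope_def_field] at h
  have : (Real.log ∘ Real.Gamma) (x + 1) - (Real.log ∘ Real.Gamma) x = Real.log x := by
    simp only [Function.comp_apply]
    rw [Real.Gamma_add_one hx.ne', Real.log_mul hx.ne' (Real.Gamma_pos_of_pos hx).ne']
    ring
  rw [this] at h
  have e2 : deriv (Real.log ∘ Real.Gamma) (x+1) = digamma (x+1) := by
    simp only [digamma, Function.comp_def]
  rw [e2] at h
  have : x + 1 - x = 1 := by ring
  rw [this, div_one] at h
  exact h

lemma digamma_ub {x : ℝ} (hx : 0 < x) : digamma (x + 1) ≤ Real.log (x + 1) := by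
  have hc : ConvexOn ℝ (Ioi 0) (Real.log ∘ Real.Gamma) := Real.convexOn_log_Gamma
  have h := hc.deriv_le_slope (mem_Ioi.mpr (by linarith : (0:ℝ) < x + 1))
    (mem_Ioi.mpr (by linarith : (0:ℝ) < x + 2)) (by linarith)
    (by simpa [Function.comp_def] using diffAt_logGamma (by linarith : (0:ℝ) < x + 1))
  rw [slope_def_field] at h
  have hx1 : (0:ℝ) < x + 1 := by linarith
  have e1 : (Real.log ∘ Real.Gamma) (x + 2) - (Real.log ∘ Real.Gamma) (x + 1) = Real.log (x + 1) := by
    simp only [Function.comp_apply]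
    rw [show x + 2 = (x + 1) + 1 by ring, Real.Gamma_add_one hx1.ne',
      Real.log_mul hx1.ne' (Real.Gamma_pos_of_pos hx1).ne']
    ring
  rw [e1] at h
  have e2 : deriv (Real.log ∘ Real.Gamma) (x+1) = digamma (x+1) := by
    simp only [digamma, Function.comp_def]
  rw [e2] at h
  have : x + 2 - (x + 1) = 1 := by ring
  rw [this, div_one] at h
  exact h

lemma hasDeriv_logpart {s : ℝ} (h1 : -1 < s) (h2 : s < 1) :
    HasDerivAt (fun u : ℝ => Real.log (1 + u) - Real.log (1 - u)) (1/(1+s) + 1/(1-s)) s := by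
  have hA : HasDerivAt (fun u : ℝ => 1 + u) 1 s := (hasDerivAt_id s).const_add 1
  have hB : HasDerivAt (fun u : ℝ => 1 - u) (-1) s := by
    simpa using (hasDerivAt_id s).const_sub 1
  have hA' := hA.log (by linarith : (1:ℝ) + s ≠ 0)
  have hB' := hB.log (by linarith : (1:ℝ) - s ≠ 0)
  have := hA'.sub hB'
  refine this.congr_deriv ?_
  ring

lemma hasDeriv_poly (s : ℝ) :
    HasDerivAt (fun u : ℝ => 2*u + 2*u^3/3 + 2*u^5/5 + 2*u^7/7 + 2*u^9/9)
      (2 + 2*s^2 + 2*s^4 + 2*s^6 + 2*s^8) s := by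
  have h1 : HasDerivAt (fun u : ℝ => u) 1 s := hasDerivAt_id s
  have h3 : HasDerivAt (fun u : ℝ => u^3) (3*s^2) s := by simpa using hasDerivAt_pow 3 s
  have h5 : HasDerivAt (fun u : ℝ => u^5) (5*s^4) s := by simpa using hasDerivAt_pow 5 s
  have h7 : HasDerivAt (fun u : ℝ => u^7) (7*s^6) s := by simpa using hasDerivAt_pow 7 s
  have h9 : HasDerivAt (fun u : ℝ => u^9) (9*s^8) s := by simpa using hasDerivAt_pow 9 s
  have := ((((h1.const_mul 2).add ((h3.const_mul 2).div_const 3)).add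
    ((h5.const_mul 2).div_const 5)).add ((h7.const_mul 2).div_const 7)).add
    ((h9.const_mul 2).div_const 9)
  refine this.congr_deriv ?_
  ring

lemma artanh_lb {t : ℝ} (h0 : 0 ≤ t) (h1 : t < 1) :
    2*t + 2*t^3/3 + 2*t^5/5 + 2*t^7/7 + 2*t^9/9 ≤ Real.log (1 + t) - Real.log (1 - t) := by
  set F : ℝ → ℝ := fun u => Real.log (1 + u) - Real.log (1 - u)
    - (2*u + 2*u^3/3 + 2*u^5/5 + 2*u^7/7 + 2*u^9/9) with hF
  have hd : ∀ s ∈ Icc (0:ℝ) t, HasDerivAt F (2*s^10/(1-s^2)) s := by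
    intro s hs
    have hs1 : -1 < s := by linarith [hs.1]
    have hs2 : s < 1 := lt_of_le_of_lt hs.2 h1
    have := (hasDeriv_logpart hs1 hs2).sub (hasDeriv_poly s)
    refine this.congr_deriv ?_
    have hne : (1:ℝ) - s^2 ≠ 0 := by nlinarith
    have hne1 : (1:ℝ) + s ≠ 0 := by linarith
    have hne2 : (1:ℝ) - s ≠ 0 := by linarith
    field_simp
    ring
  have hmono : MonotoneOn F (Icc 0 t) := by
    apply monotoneOn_of_deriv_nonneg (convex_Icc 0 t)
    · exact fun s hs => ((hd s hs).differentiableAt.continuousAt).continuousWithinAt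
    · intro s hs
      exact ((hd s (interior_subset hs)).differentiableAt).differentiableWithinAt
    · intro s hs
      rw [interior_Icc] at hs
      rw [(hd s ⟨hs.1.le, hs.2.le⟩).deriv]
      have : (0:ℝ) < 1 - s^2 := by nlinarith [hs.1, hs.2.trans h1]
      positivity
  have h := hmono (left_mem_Icc.mpr h0) (right_mem_Icc.mpr h0) h0
  simp only [hF] at h
  norm_num at h
  linarith

lemma artanh_ub {t : ℝ} (h0 : 0 ≤ t) (h1 : t < 1) :
    Real.log (1 + t) - Real.log (1 - t) ≤
      2*t + 2*t^3/3 + 2*t^5/5 + 2*t^7/7 + 2*t^9/9 + 2*t^11/(11*(1-t^2)) := by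
  have ht2 : (0:ℝ) < 1 - t^2 := by nlinarith
  set G : ℝ → ℝ := fun u => 2*u + 2*u^3/3 + 2*u^5/5 + 2*u^7/7 + 2*u^9/9 + 2*u^11/(11*(1-t^2))
    - (Real.log (1 + u) - Real.log (1 - u)) with hG
  have hd : ∀ s ∈ Icc (0:ℝ) t,
      HasDerivAt G (2*s^10/(1-t^2) - 2*s^10/(1-s^2)) s := by
    intro s hs
    have hs1 : -1 < s := by linarith [hs.1]
    have hs2 : s < 1 := lt_of_le_of_lt hs.2 h1
    have h11 : HasDerivAt (fun u : ℝ => 2*u^11/(11*(1-t^2))) (2*s^10/(1-t^2)) s := by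
      have := ((hasDerivAt_pow 11 s).const_mul 2).div_const (11*(1-t^2))
      refine this.congr_deriv ?_
      push_cast
      field_simp
    have := ((hasDeriv_poly s).add h11).sub (hasDeriv_logpart hs1 hs2)
    refine this.congr_deriv ?_
    have hne : (1:ℝ) - s^2 ≠ 0 := by nlinarith
    have hne1 : (1:ℝ) + s ≠ 0 := by linarith
    have hne2 : (1:ℝ) - s ≠ 0 := by linarith
    field_simp
    ring
  have hmono : MonotoneOn G (Icc 0 t) := by
    apply monotoneOn_of_deriv_nonneg (convex_Icc 0 t)
    · exact fun s hs => ((hd s hs).differentiableAt.continuousAt).continuousWithinAt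
    · intro s hs
      exact ((hd s (interior_subset hs)).differentiableAt).differentiableWithinAt
    · intro s hs
      rw [interior_Icc] at hs
      rw [(hd s ⟨hs.1.le, hs.2.le⟩).deriv]
      have hst : s < 1 := hs.2.trans h1
      have hs2 : (0:ℝ) < 1 - s^2 := by nlinarith [hs.1]
      have : 1 - t^2 ≤ 1 - s^2 := by nlinarith [hs.1, hs.2]
      have h1' : 2*s^10/(1-s^2) ≤ 2*s^10/(1-t^2) :=
        div_le_div_of_nonneg_left (by positivity) ht2 this
      linarith
  have h := hmono (left_mem_Icc.mpr h0) (right_mem_Icc.mpr h0) h0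
  simp only [hG] at h
  norm_num at h
  linarith

noncomputable def P (x : ℝ) : ℝ :=
  1 / (24 * x ^ 2) - 1 / (24 * x ^ 3) + 23 / (960 * x ^ 4) - 1 / (160 * x ^ 5)
    - 11 / (8064 * x ^ 6) - 1 / (896 * x ^ 7)

lemma key1 {y : ℝ} (hy : 0 < y) :
    1/(y+1) + P y - P (y+1) <
      2*(1/(2*(y+1))) + 2*(1/(2*(y+1)))^3/3 + 2*(1/(2*(y+1)))^5/5
        + 2*(1/(2*(y+1)))^7/7 + 2*(1/(2*(y+1)))^9/9 := by
  rw [← sub_pos]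
  have hy1 : (0:ℝ) < y + 1 := by linarith
  have h : 2*(1/(2*(y+1))) + 2*(1/(2*(y+1)))^3/3 + 2*(1/(2*(y+1)))^5/5
        + 2*(1/(2*(y+1)))^7/7 + 2*(1/(2*(y+1)))^9/9 - (1/(y+1) + P y - P (y+1))
      = ((1/896) + (23/2016) * y ^ 1 + (263/4480) * y ^ 2 + (1177/6720) * y ^ 3 + (49/160) * y ^ 4 + (37/120) * y ^ 5 + (53/320) * y ^ 6 + (143/3840) * y ^ 7) / (y^7 * (y+1)^9) := by
    unfold P
    field_simp
    ring
  rw [h]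
  positivity

set_option maxHeartbeats 1000000 in
lemma key2 {y : ℝ} (hy : 0 < y) :
    2*(1/(2*(y+1))) + 2*(1/(2*(y+1)))^3/3 + 2*(1/(2*(y+1)))^5/5
        + 2*(1/(2*(y+1)))^7/7 + 2*(1/(2*(y+1)))^9/9
        + 2/(11*(2*(y+1))^9*(2*y+1)*(2*y+3))
      - (1/(y+1) + P y - P (y+1))
      < 143/(30720*y^8) - 143/(30720*(y+1)^8) := by
  rw [← sub_pos]
  have hy1 : (0:ℝ) < y + 1 := by linarith
  have h2y1 : (0:ℝ) < 2*y+1 := by linarith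
  have h2y3 : (0:ℝ) < 2*y+3 := by linarith
  have h : 143/(30720*y^8) - 143/(30720*(y+1)^8)
      - (2*(1/(2*(y+1))) + 2*(1/(2*(y+1)))^3/3 + 2*(1/(2*(y+1)))^5/5
        + 2*(1/(2*(y+1)))^7/7 + 2*(1/(2*(y+1)))^9/9
        + 2/(11*(2*(y+1))^9*(2*y+1)*(2*y+3))
        - (1/(y+1) + P y - P (y+1)))
      = ((143/10240) + (40321/215040) * y ^ 1 + (82179/71680) * y ^ 2 + (2706721/645120) * y ^ 3 + (3273803/322560) * y ^ 4 + (1090577/64512) * y ^ 5 + (1262831/64512) * y ^ 6 + (1668811/107520) * y ^ 7 + (4765507/591360) * y ^ 8 + (42041/16896) * y ^ 9 + (3055/8448) * y ^ 10 + (1/128) * y ^ 11) / (y^8 * (y+1)^11 * (2*y+1) * (2*y+3)) := by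
    have e1 : (1:ℝ)/(2*(y+1)) = 1/2 * (1/(y+1)) := by rw [one_div, mul_inv]; ring
    have e9 : ((2:ℝ)*(y+1))^9 = 512*(y+1)^9 := by ring
    unfold P
    rw [e1, e9]
    field_simp
    ring
  rw [h]
  positivity

noncomputable def dD (y : ℝ) : ℝ :=
  Real.log (y + 3/2) - Real.log (y + 1/2) - (1/(y+1) + P y - P (y+1))

noncomputable def gG (y : ℝ) : ℝ := digamma (y + 1) - Real.log (y + 1/2) - P y

noncomputable def UU (y : ℝ) : ℝ := 143/(30720*y^8)

lemma log_ratio {y : ℝ} (hy : 0 < y) :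
    Real.log (y + 3/2) - Real.log (y + 1/2)
      = Real.log (1 + 1/(2*(y+1))) - Real.log (1 - 1/(2*(y+1))) := by
  have hy1 : (0:ℝ) < y + 1 := by linarith
  have e1 : 1 + 1/(2*(y+1)) = (y + 3/2)/(y+1) := by field_simp; ring
  have e2 : 1 - 1/(2*(y+1)) = (y + 1/2)/(y+1) := by field_simp; ring
  rw [e1, e2, Real.log_div (by linarith) hy1.ne', Real.log_div (by linarith) hy1.ne']
  ring

lemma t_mem {y : ℝ} (hy : 0 < y) : 0 ≤ 1/(2*(y+1)) ∧ 1/(2*(y+1)) < 1 := by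
  constructor
  · positivity
  · rw [div_lt_one (by linarith)]; linarith

lemma dD_pos {y : ℝ} (hy : 0 < y) : 0 < dD y := by
  obtain ⟨ht0, ht1⟩ := t_mem hy
  have hl := artanh_lb ht0 ht1
  have hk := key1 hy
  unfold dD
  rw [log_ratio hy]
  linarith

lemma tail_eq {y : ℝ} (hy : 0 < y) :
    2*(1/(2*(y+1)))^11/(11*(1-(1/(2*(y+1)))^2))
      = 2/(11*(2*(y+1))^9*(2*y+1)*(2*y+3)) := by
  have hy1 : (0:ℝ) < y + 1 := by linarith
  have hq : (1:ℝ) - (1/(2*(y+1)))^2 = (2*y+1)*(2*y+3)/(2*(y+1))^2 := by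
    field_simp; ring
  rw [hq]
  have h2y1 : (0:ℝ) < 2*y+1 := by linarith
  have h2y3 : (0:ℝ) < 2*y+3 := by linarith
  field_simp

lemma dD_lt {y : ℝ} (hy : 0 < y) : dD y < UU y - UU (y+1) := by
  obtain ⟨ht0, ht1⟩ := t_mem hy
  have hl := artanh_ub ht0 ht1
  rw [tail_eq hy] at hl
  have hk := key2 hy
  unfold dD UU
  rw [log_ratio hy]
  linarith

lemma step {y : ℝ} (hy : 0 < y) : gG y = dD y + gG (y+1) := by
  have h := digamma_rec (show (0:ℝ) < y + 1 by linarith)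
  unfold gG dD
  rw [show y + 1 + 1/2 = y + 3/2 by ring] at *
  rw [h]
  ring

lemma P_abs {y : ℝ} (hy : 1 ≤ y) : |P y| ≤ 1/y := by
  have hy0 : (0:ℝ) < y := by linarith
  have hp : ∀ k : ℕ, 1 ≤ k → y ≤ y^k := fun k hk => by
    calc y = y^1 := (pow_one y).symm
    _ ≤ y^k := pow_le_pow_right₀ hy hk
  have h2 := hp 2 (by norm_num); have h3 := hp 3 (by norm_num)
  have h4 := hp 4 (by norm_num); have h5 := hp 5 (by norm_num)
  have h6 := hp 6 (by norm_num); have h7 := hp 7 (by norm_num)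
  have b2 : 1/(24*y^2) ≤ 1/(24*y) := by gcongr
  have b3 : 1/(24*y^3) ≤ 1/(24*y) := by gcongr
  have b4 : 23/(960*y^4) ≤ 23/(960*y) := by gcongr
  have b5 : 1/(160*y^5) ≤ 1/(160*y) := by gcongr
  have b6 : 11/(8064*y^6) ≤ 11/(8064*y) := by gcongr
  have b7 : 1/(896*y^7) ≤ 1/(896*y) := by gcongr
  have p2 : 0 < 1/(24*y^2) := by positivity
  have p3 : 0 < 1/(24*y^3) := by positivity
  have p4 : 0 < 23/(960*y^4) := by positivity
  have p5 : 0 < 1/(160*y^5) := by positivity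
  have p6 : 0 < 11/(8064*y^6) := by positivity
  have p7 : 0 < 1/(896*y^7) := by positivity
  have hsum : 1/(24*y) + 23/(960*y) ≤ 1/y := by
    rw [div_add_div _ _ (by positivity) (by positivity), div_le_div_iff₀ (by positivity) (by positivity)]
    ring_nf; nlinarith
  have hsum2 : 1/(24*y) + 1/(160*y) + 11/(8064*y) + 1/(896*y) ≤ 1/y := by
    have e : 1/(24*y) + 1/(160*y) + 11/(8064*y) + 1/(896*y) = (1/24+1/160+11/8064+1/896)/y := by
      field_simp
    rw [e]; gcongr; norm_num
  rw [abs_le]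
  unfold P
  constructor
  · nlinarith
  · nlinarith

lemma log_diff_ub {y : ℝ} (hy : 1 ≤ y) : Real.log (y+1) - Real.log (y+1/2) ≤ 1/(2*y) := by
  have hy0 : (0:ℝ) < y := by linarith
  have h1 : (0:ℝ) < y + 1/2 := by linarith
  have h2 : (0:ℝ) < y + 1 := by linarith
  rw [← Real.log_div h2.ne' h1.ne']
  have := Real.log_le_sub_one_of_pos (show (0:ℝ) < (y+1)/(y+1/2) by positivity)
  have e : (y+1)/(y+1/2) - 1 = (1/2)/(y+1/2) := by field_simp; ring
  rw [e] at this
  refine this.trans ?_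
  rw [div_le_div_iff₀ h1 (by positivity)]
  linarith

lemma log_diff_lb {y : ℝ} (hy : 1 ≤ y) : Real.log (y+1/2) - Real.log y ≤ 1/(2*y) := by
  have hy0 : (0:ℝ) < y := by linarith
  have h1 : (0:ℝ) < y + 1/2 := by linarith
  rw [← Real.log_div h1.ne' hy0.ne']
  have := Real.log_le_sub_one_of_pos (show (0:ℝ) < (y+1/2)/y by positivity)
  have e : (y+1/2)/y - 1 = 1/(2*y) := by field_simp; ring
  rw [e] at this
  exact this

lemma gG_abs {y : ℝ} (hy : 1 ≤ y) : |gG y| ≤ 2/y := by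
  have hy0 : (0:ℝ) < y := by linarith
  have hub := digamma_ub hy0
  have hlb := digamma_lb hy0
  have h1 := log_diff_ub hy
  have h2 := log_diff_lb hy
  have hP := abs_le.mp (P_abs hy)
  have hhalf : 1/(2*y) ≤ 1/y := by gcongr <;> linarith
  rw [abs_le]
  unfold gG
  constructor
  · have : -(2/y) = -(1/(2*y)) - 1/y - (2/y - 1/(2*y) - 1/y) := by ring
    have hq : 0 ≤ 2/y - 1/(2*y) - 1/y := by
      have : 2/y - 1/(2*y) - 1/y = 1/(2*y) := by ring
      rw [this]; positivity
    nlinarith [hP.1, hP.2]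
  · have hq : 0 ≤ 2/y - 1/(2*y) - 1/y := by
      have : 2/y - 1/(2*y) - 1/y = 1/(2*y) := by ring
      rw [this]; positivity
    nlinarith [hP.1, hP.2]

lemma tendsto_gG {x : ℝ} (hx : 0 < x) :
    Filter.Tendsto (fun n : ℕ => gG (x + n)) Filter.atTop (nhds 0) := by
  have hxn : Filter.Tendsto (fun n : ℕ => x + (n:ℝ)) Filter.atTop Filter.atTop :=
    tendsto_atTop_add_const_left _ x tendsto_natCast_atTop_atTop
  have h2 : Filter.Tendsto (fun n : ℕ => 2/(x + (n:ℝ))) Filter.atTop (nhds 0) :=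
    Filter.Tendsto.div_atTop tendsto_const_nhds hxn
  apply squeeze_zero_norm' ?_ h2
  filter_upwards [hxn.eventually_ge_atTop 1] with n hn
  rw [Real.norm_eq_abs]
  exact gG_abs hn

lemma tendsto_UU {x : ℝ} (hx : 0 < x) :
    Filter.Tendsto (fun n : ℕ => UU (x + n)) Filter.atTop (nhds 0) := by
  have hxn : Filter.Tendsto (fun n : ℕ => x + (n:ℝ)) Filter.atTop Filter.atTop :=
    tendsto_atTop_add_const_left _ x tendsto_natCast_atTop_atTop
  have h2 : Filter.Tendsto (fun n : ℕ => 1/(x + (n:ℝ))) Filter.atTop (nhds 0) :=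
    Filter.Tendsto.div_atTop tendsto_const_nhds hxn
  apply squeeze_zero_norm' ?_ h2
  filter_upwards [hxn.eventually_ge_atTop 1] with n hn
  have h0 : (0:ℝ) < x + n := by linarith
  rw [Real.norm_eq_abs]
  have hU : 0 ≤ UU (x+n) := by unfold UU; positivity
  rw [abs_of_nonneg hU]
  unfold UU
  have : x + (n:ℝ) ≤ (x+(n:ℝ))^8 := by
    calc x + (n:ℝ) = (x+(n:ℝ))^1 := (pow_one _).symm
    _ ≤ (x+(n:ℝ))^8 := pow_le_pow_right₀ hn (by norm_num)
  rw [div_le_div_iff₀ (by positivity) h0]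
  nlinarith

lemma gG_ge_iter {y : ℝ} (hy : 0 < y) : ∀ n : ℕ, gG (y + n) ≤ gG y := by
  intro n
  induction n with
  | zero => simp
  | succ n ih =>
    have hyn : (0:ℝ) < y + n := by positivity
    have hs := step hyn
    have hd := dD_pos hyn
    have : gG (y + (n+1:ℕ)) = gG ((y + n) + 1) := by push_cast; ring_nf
    rw [this]
    linarith

lemma gG_nonneg {y : ℝ} (hy : 0 < y) : 0 ≤ gG y :=
  le_of_tendsto (tendsto_gG hy) (Filter.Eventually.of_forall fun n => gG_ge_iter hy n)

lemma hH_ge_iter {y : ℝ} (hy : 0 < y) : ∀ n : ℕ, UU (y + n) - gG (y + n) ≤ UU y - gG y := by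
  intro n
  induction n with
  | zero => simp
  | succ n ih =>
    have hyn : (0:ℝ) < y + n := by positivity
    have hs := step hyn
    have hd := dD_lt hyn
    have e1 : gG (y + (n+1:ℕ)) = gG ((y + n) + 1) := by push_cast; ring_nf
    have e2 : UU (y + (n+1:ℕ)) = UU ((y + n) + 1) := by push_cast; ring_nf
    rw [e1, e2]
    linarith

lemma gG_le_UU {y : ℝ} (hy : 0 < y) : gG y ≤ UU y := by
  have ht := (tendsto_UU hy).sub (tendsto_gG hy)
  rw [sub_zero] at ht
  have := le_of_tendsto ht (Filter.Eventually.of_forall fun n => hH_ge_iter hy n)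
  linarith

theorem stmt13 (x : ℝ) (hx : 0 < x) :
    P x < digamma (x + 1) - Real.log (x + 1 / 2) ∧
    digamma (x + 1) - Real.log (x + 1 / 2) < P x + 143 / (30720 * x ^ 8) := by
  have hx1 : (0:ℝ) < x + 1 := by linarith
  have hs := step hx
  have hd := dD_pos hx
  have hdl := dD_lt hx
  have h1 := gG_nonneg hx1
  have h2 := gG_le_UU hx1
  have e : gG x = digamma (x + 1) - Real.log (x + 1/2) - P x := rfl
  have eU : UU x = 143/(30720*x^8) := rfl
  constructor
  · nlinarith [hs, hd, h1]
  · have : gG x < UU x := by linarith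
    rw [e, eU] at this
    linarith
end

section
/- For every natural number n ≥ 1, the quantity Δ_n := 6/5 - (1/(H_n - (1/2)ln(n(n+1)) - γ) - 6n(n+1)) satisfies 0 < Δ_n < 38/(175 n(n+1)). -/
open Real Filter

noncomputable def H (n : ℕ) : ℝ := ∑ i ∈ Finset.range n, (1 : ℝ) / (i + 1)

/-- Truncated arctanh series. -/
noncomputable def Pser (x : ℝ) : ℝ :=
  x^3/3 + x^5/5 + x^7/7 + x^9/9 + x^11/11 + x^13/13

noncomputable def fseq (n : ℕ) : ℝ :=
  H n - (1/2) * Real.log (n * (n+1)) - Real.eulerMascheroniConstant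

noncomputable def Lb (n : ℕ) : ℝ := 1 / (6*(n:ℝ)*((n:ℝ)+1) + 6/5)

noncomputable def Ub (n : ℕ) : ℝ :=
  175*((n:ℝ)*((n:ℝ)+1)) / (1050*((n:ℝ)*((n:ℝ)+1))^2 + 210*((n:ℝ)*((n:ℝ)+1)) - 38)

lemma H_eq (n : ℕ) : H n = ((harmonic n : ℚ) : ℝ) := by
  unfold H harmonic
  push_cast
  simp [one_div]

lemma keyL (y : ℝ) (hy : 1 ≤ y) :
    1/(6*y*(y+1)+6/5) - 1/(6*(y+1)*(y+2)+6/5)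
      < Pser (1/(y+1)) - 1/(y*(y+1)^14) := by
  have h0 : 0 < y := by linarith
  have h1 : (0:ℝ) < y + 1 := by linarith
  have ht : (0:ℝ) ≤ y - 1 := by linarith
  have q1 : (0:ℝ) < 6*y*(y+1)+6/5 := by nlinarith
  have q2 : (0:ℝ) < 6*(y+1)*(y+2)+6/5 := by nlinarith
  have expand : (Pser (1/(y+1)) - 1/(y*(y+1)^14)) - (1/(6*y*(y+1)+6/5) - 1/(6*(y+1)*(y+2)+6/5))
      = (3321728388 + 22930967484 * (y-1)^1 + 67755053808 * (y-1)^2 + 118097359776 * (y-1)^3 + 137717334612 * (y-1)^4 + 113997818412 * (y-1)^5 + 68831819532 * (y-1)^6 + 30560518404 * (y-1)^7 + 9903938148 * (y-1)^8 + 2285181756 * (y-1)^9 + 356411484 * (y-1)^10 + 33745140 * (y-1)^11 + 1467180 * (y-1)^12)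
        / (1126125 * (y*(y+1)^14) * (6*y*(y+1)+6/5) * (6*(y+1)*(y+2)+6/5)) := by
    unfold Pser
    field_simp
    ring
  have hN : (0:ℝ) < 3321728388 + 22930967484 * (y-1)^1 + 67755053808 * (y-1)^2 + 118097359776 * (y-1)^3 + 137717334612 * (y-1)^4 + 113997818412 * (y-1)^5 + 68831819532 * (y-1)^6 + 30560518404 * (y-1)^7 + 9903938148 * (y-1)^8 + 2285181756 * (y-1)^9 + 356411484 * (y-1)^10 + 33745140 * (y-1)^11 + 1467180 * (y-1)^12 := by
    have := pow_nonneg ht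
    linarith [this 1, this 2, this 3, this 4, this 5, this 6, this 7, this 8, this 9,
      this 10, this 11, this 12]
  have hD : (0:ℝ) < 1126125 * (y*(y+1)^14) * (6*y*(y+1)+6/5) * (6*(y+1)*(y+2)+6/5) := by
    have := pow_pos h1 14
    positivity
  have := div_pos hN hD
  linarith

lemma keyU (y : ℝ) (hy : 1 ≤ y) :
    Pser (1/(y+1)) + 1/(y*(y+1)^14)
      < 175*(y*(y+1)) / (1050*(y*(y+1))^2 + 210*(y*(y+1)) - 38)
        - 175*((y+1)*(y+2)) / (1050*((y+1)*(y+2))^2 + 210*((y+1)*(y+2)) - 38) := by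
  have h0 : 0 < y := by linarith
  have h1 : (0:ℝ) < y + 1 := by linarith
  have ht : (0:ℝ) ≤ y - 1 := by linarith
  have r1 : (0:ℝ) < 1050*(y*(y+1))^2 + 210*(y*(y+1)) - 38 := by nlinarith
  have r2 : (0:ℝ) < 1050*((y+1)*(y+2))^2 + 210*((y+1)*(y+2)) - 38 := by nlinarith
  have expand : (175*(y*(y+1)) / (1050*(y*(y+1))^2 + 210*(y*(y+1)) - 38)
        - 175*((y+1)*(y+2)) / (1050*((y+1)*(y+2))^2 + 210*((y+1)*(y+2)) - 38))
      - (Pser (1/(y+1)) + 1/(y*(y+1)^14))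
      = (14962985403988 + 130400428982564 * (y-1)^1 + 490970963508368 * (y-1)^2 + 1086437905710696 * (y-1)^3 + 1604962376804752 * (y-1)^4 + 1693405126069552 * (y-1)^5 + 1326199431813872 * (y-1)^6 + 787120057574784 * (y-1)^7 + 356847541911108 * (y-1)^8 + 123169121383476 * (y-1)^9 + 31882830060564 * (y-1)^10 + 6003365981340 * (y-1)^11 + 777402078180 * (y-1)^12 + 61978316400 * (y-1)^13 + 2295493200 * (y-1)^14)
        / (45045 * (y*(y+1)^14) * (1050*(y*(y+1))^2 + 210*(y*(y+1)) - 38)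
            * (1050*((y+1)*(y+2))^2 + 210*((y+1)*(y+2)) - 38)) := by
    unfold Pser
    have e1 := r1.ne'
    have e2 := r2.ne'
    generalize hA : (1050*(y*(y+1))^2 + 210*(y*(y+1)) - 38 : ℝ) = A at e1 ⊢
    generalize hB : (1050*((y+1)*(y+2))^2 + 210*((y+1)*(y+2)) - 38 : ℝ) = B at e2 ⊢
    field_simp
    rw [← hA, ← hB]
    ring
  have hN : (0:ℝ) < 14962985403988 + 130400428982564 * (y-1)^1 + 490970963508368 * (y-1)^2 + 1086437905710696 * (y-1)^3 + 1604962376804752 * (y-1)^4 + 1693405126069552 * (y-1)^5 + 1326199431813872 * (y-1)^6 + 787120057574784 * (y-1)^7 + 356847541911108 * (y-1)^8 + 123169121383476 * (y-1)^9 + 31882830060564 * (y-1)^10 + 6003365981340 * (y-1)^11 + 777402078180 * (y-1)^12 + 61978316400 * (y-1)^13 + 2295493200 * (y-1)^14 := by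
    have := pow_nonneg ht
    linarith [this 1, this 2, this 3, this 4, this 5, this 6, this 7, this 8, this 9,
      this 10, this 11, this 12, this 13, this 14]
  have hD : (0:ℝ) < 45045 * (y*(y+1)^14) * (1050*(y*(y+1))^2 + 210*(y*(y+1)) - 38)
      * (1050*((y+1)*(y+2))^2 + 210*((y+1)*(y+2)) - 38) := by
    have h14 := pow_pos h1 14
    positivity
  have := div_pos hN hD
  linarith

/-- arctanh series bound derived from the Mathlib log series estimate. -/
lemma atanh_bound (x : ℝ) (h0 : 0 < x) (h1 : x < 1) :
    |(1/2) * (Real.log (1+x) - Real.log (1-x)) - x - Pser x| ≤ x^15 / (1-x) := by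
  have hx : |x| < 1 := by rw [abs_of_pos h0]; exact h1
  have hx' : |(-x)| < 1 := by rwa [abs_neg]
  have hA := abs_log_sub_add_sum_range_le hx 14
  have hB := abs_log_sub_add_sum_range_le hx' 14
  rw [abs_of_pos h0] at hA
  rw [abs_neg, abs_of_pos h0] at hB
  have h1mx : (1:ℝ) - -x = 1 + x := by ring
  rw [h1mx] at hB
  set A := (∑ i ∈ Finset.range 14, x ^ (i+1) / (i+1)) + Real.log (1-x) with hAdef
  set B := (∑ i ∈ Finset.range 14, (-x) ^ (i+1) / (i+1)) + Real.log (1+x) with hBdef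
  have key : (1/2) * (Real.log (1+x) - Real.log (1-x)) - x - Pser x
      = (1/2) * B - (1/2) * A := by
    rw [hAdef, hBdef]
    simp only [Finset.sum_range_succ, Finset.sum_range_zero]
    unfold Pser
    push_cast
    ring
  rw [key]
  calc |(1/2) * B - (1/2) * A| ≤ |(1/2) * B| + |(1/2) * A| := abs_sub _ _
    _ = (1/2) * |B| + (1/2) * |A| := by
        rw [abs_mul, abs_mul, abs_of_nonneg (by norm_num : (0:ℝ) ≤ 1/2)]
    _ ≤ (1/2) * (x^15/(1-x)) + (1/2) * (x^15/(1-x)) := by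
        gcongr
    _ = x^15 / (1-x) := by ring

lemma fseq_sub (n : ℕ) (hn : 1 ≤ n) :
    fseq n - fseq (n+1)
      = (1/2) * (Real.log (1 + 1/((n:ℝ)+1)) - Real.log (1 - 1/((n:ℝ)+1))) - 1/((n:ℝ)+1) := by
  have hn' : (1:ℝ) ≤ (n:ℝ) := by exact_mod_cast hn
  have h0 : (0:ℝ) < (n:ℝ) := by linarith
  have h1 : (0:ℝ) < (n:ℝ)+1 := by linarith
  have h2 : (0:ℝ) < (n:ℝ)+2 := by linarith
  have hx1 : (1:ℝ) + 1/((n:ℝ)+1) = ((n:ℝ)+2)/((n:ℝ)+1) := by field_simp; ring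
  have hx2 : (1:ℝ) - 1/((n:ℝ)+1) = (n:ℝ)/((n:ℝ)+1) := by field_simp; ring
  have hH : H (n+1) = H n + 1/((n:ℝ)+1) := by
    unfold H
    rw [Finset.sum_range_succ]
  have e2 : ((n+1 : ℕ) : ℝ) * (((n+1 : ℕ) : ℝ) + 1) = ((n:ℝ)+1)*((n:ℝ)+2) := by
    push_cast; ring
  have l1 : Real.log (((n:ℝ)+1)*((n:ℝ)+2))
      = Real.log ((n:ℝ)*((n:ℝ)+1))
        + (Real.log (1 + 1/((n:ℝ)+1)) - Real.log (1 - 1/((n:ℝ)+1))) := by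
    rw [hx1, hx2,
      Real.log_mul (ne_of_gt h1) (ne_of_gt h2),
      Real.log_mul (ne_of_gt h0) (ne_of_gt h1),
      Real.log_div (ne_of_gt h2) (ne_of_gt h1),
      Real.log_div (ne_of_gt h0) (ne_of_gt h1)]
    ring
  unfold fseq
  rw [e2, hH, l1]
  ring

lemma fseq_tendsto : Tendsto fseq atTop (nhds 0) := by
  have t1 := Real.tendsto_harmonic_sub_log
  have t2 := Real.tendsto_harmonic_sub_log_add_one
  have t3 : Tendsto (fun n : ℕ =>
      (1/2) * (((harmonic n : ℚ):ℝ) - Real.log n + (((harmonic n : ℚ):ℝ) - Real.log (n+1)))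
        - Real.eulerMascheroniConstant) atTop (nhds 0) := by
    have h := ((t1.add t2).const_mul (1/2 : ℝ)).sub_const Real.eulerMascheroniConstant
    have : (1/2 : ℝ) * (Real.eulerMascheroniConstant + Real.eulerMascheroniConstant)
        - Real.eulerMascheroniConstant = 0 := by ring
    rwa [this] at h
  apply t3.congr'
  filter_upwards [eventually_ge_atTop 1] with n hn
  have hn' : (1:ℝ) ≤ (n:ℝ) := by exact_mod_cast hn
  have hlog : Real.log ((n:ℝ) * ((n:ℝ)+1)) = Real.log n + Real.log ((n:ℝ)+1) :=
    Real.log_mul (by linarith) (by linarith)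
  unfold fseq
  rw [H_eq, hlog]
  ring

lemma Lb_tendsto : Tendsto Lb atTop (nhds 0) := by
  apply tendsto_of_tendsto_of_tendsto_of_le_of_le' tendsto_const_nhds
    tendsto_one_div_atTop_nhds_zero_nat
  · filter_upwards [eventually_ge_atTop 1] with n hn
    have hn' : (1:ℝ) ≤ (n:ℝ) := by exact_mod_cast hn
    unfold Lb
    positivity
  · filter_upwards [eventually_ge_atTop 1] with n hn
    have hn' : (1:ℝ) ≤ (n:ℝ) := by exact_mod_cast hn
    unfold Lb
    rw [div_le_div_iff₀ (by nlinarith) (by linarith)]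
    nlinarith

lemma Ub_tendsto : Tendsto Ub atTop (nhds 0) := by
  apply tendsto_of_tendsto_of_tendsto_of_le_of_le' tendsto_const_nhds
    tendsto_one_div_atTop_nhds_zero_nat
  · filter_upwards [eventually_ge_atTop 1] with n hn
    have hn' : (1:ℝ) ≤ (n:ℝ) := by exact_mod_cast hn
    unfold Ub
    have : (0:ℝ) < 1050*((n:ℝ)*((n:ℝ)+1))^2 + 210*((n:ℝ)*((n:ℝ)+1)) - 38 := by nlinarith
    positivity
  · filter_upwards [eventually_ge_atTop 1] with n hn
    have hn' : (1:ℝ) ≤ (n:ℝ) := by exact_mod_cast hn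
    unfold Ub
    rw [div_le_div_iff₀ (by nlinarith) (by linarith)]
    nlinarith

lemma step_s18 (n : ℕ) (hn : 1 ≤ n) :
    Lb n - Lb (n+1) < fseq n - fseq (n+1) ∧ fseq n - fseq (n+1) < Ub n - Ub (n+1) := by
  have hn' : (1:ℝ) ≤ (n:ℝ) := by exact_mod_cast hn
  set y : ℝ := (n:ℝ) with hy
  have h1 : (0:ℝ) < y + 1 := by linarith
  have hx0 : (0:ℝ) < 1/(y+1) := by positivity
  have hx1 : 1/(y+1) < 1 := by rw [div_lt_one h1]; linarith
  have hb := atanh_bound (1/(y+1)) hx0 hx1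
  have htail : (1/(y+1))^15 / (1 - 1/(y+1)) = 1/(y*(y+1)^14) := by
    have h0 : (0:ℝ) < y := by linarith
    rw [show (1:ℝ) - 1/(y+1) = y/(y+1) by field_simp; ring]
    field_simp
  rw [htail] at hb
  have hfs := fseq_sub n hn
  rw [← hfs] at hb
  rw [abs_le] at hb
  have hL := keyL y hn'
  have hU := keyU y hn'
  have hLb : Lb n - Lb (n+1) = 1/(6*y*(y+1)+6/5) - 1/(6*(y+1)*(y+2)+6/5) := by
    unfold Lb; push_cast; rw [hy]; ring_nf
  have hUb : Ub n - Ub (n+1)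
      = 175*(y*(y+1)) / (1050*(y*(y+1))^2 + 210*(y*(y+1)) - 38)
        - 175*((y+1)*(y+2)) / (1050*((y+1)*(y+2))^2 + 210*((y+1)*(y+2)) - 38) := by
    unfold Ub; push_cast; rw [hy]; ring_nf
  constructor
  · rw [hLb]; linarith [hb.1]
  · rw [hUb]; linarith [hb.2]

lemma pos_of_tendsto_zero (g : ℕ → ℝ) (n : ℕ)
    (h0 : Tendsto g atTop (nhds 0)) (hstep : ∀ m, n ≤ m → g (m+1) < g m) : 0 < g n := by
  have mono : ∀ m, n+1 ≤ m → g m ≤ g (n+1) := by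
    intro m hm
    induction m, hm using Nat.le_induction with
    | base => exact le_refl _
    | succ m hm ih => exact le_trans (le_of_lt (hstep m (by omega))) ih
  have h1 : (0:ℝ) ≤ g (n+1) :=
    le_of_tendsto h0 (eventually_atTop.2 ⟨n+1, mono⟩)
  have h2 := hstep n (le_refl n)
  linarith

lemma fseq_bounds (n : ℕ) (hn : 1 ≤ n) : Lb n < fseq n ∧ fseq n < Ub n := by
  constructor
  · have := pos_of_tendsto_zero (fun m => fseq m - Lb m) n
      (by simpa using fseq_tendsto.sub Lb_tendsto)
      (fun m hm => by
        have := (step_s18 m (le_trans hn hm)).1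
        linarith)
    simpa using this
  · have := pos_of_tendsto_zero (fun m => Ub m - fseq m) n
      (by simpa using Ub_tendsto.sub fseq_tendsto)
      (fun m hm => by
        have := (step_s18 m (le_trans hn hm)).2
        linarith)
    simpa using this

theorem stmt18 (n : ℕ) (hn : 1 ≤ n) :
    0 < 6 / 5 - (1 / (H n - (1 / 2) * Real.log (n * (n + 1)) - Real.eulerMascheroniConstant) - 6 * n * (n + 1)) ∧
    6 / 5 - (1 / (H n - (1 / 2) * Real.log (n * (n + 1)) - Real.eulerMascheroniConstant) - 6 * n * (n + 1))
      < 38 / (175 * n * (n + 1)) := by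
  have hn' : (1:ℝ) ≤ (n:ℝ) := by exact_mod_cast hn
  obtain ⟨hL, hU⟩ := fseq_bounds n hn
  set y : ℝ := (n:ℝ)
  have hLpos : 0 < Lb n := by
    unfold Lb; positivity
  have hfpos : 0 < fseq n := lt_trans hLpos hL
  have hUpos : 0 < Ub n := lt_trans hfpos hU
  have hfeq : fseq n = H n - (1/2) * Real.log (n * (n+1)) - Real.eulerMascheroniConstant := by
    unfold fseq; ring_nf
  have hr1 : (0:ℝ) < 1050*(y*(y+1))^2 + 210*(y*(y+1)) - 38 := by nlinarith
  -- 1/fseq n < 1/Lb n = 6y(y+1)+6/5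
  have hinv1 : 1 / fseq n < 6*y*(y+1) + 6/5 := by
    have := one_div_lt_one_div_of_lt hLpos hL
    rwa [show Lb n = 1/(6*y*(y+1)+6/5) from rfl, one_div_one_div] at this
  -- 1/Ub n < 1/fseq n
  have hinv2 : 6*y*(y+1) + 6/5 - 38/(175*(y*(y+1))) < 1 / fseq n := by
    have h2 := one_div_lt_one_div_of_lt hfpos hU
    have hUval : 1 / Ub n = 6*y*(y+1) + 6/5 - 38/(175*(y*(y+1))) := by
      unfold Ub
      rw [one_div_div]
      have hy0 : (0:ℝ) < y := by linarith
      field_simp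
      ring
    rwa [hUval] at h2
  rw [← hfeq]
  constructor
  · linarith
  · have hy0 : (0:ℝ) < y := by linarith
    have : 38/(175*y*(y+1)) = 38/(175*(y*(y+1))) := by ring_nf
    linarith [hinv2, this]
end

section
/- For every natural number n ≥ 1, H_n - (1/2)ln(n(n+1)) - γ > 0 and H_n - ln(n + 1/2) - γ > 0. -/
open Real Filter

lemma key_log (t : ℝ) (ht0 : 0 < t) (ht1 : t < 1) :
    2 * t < Real.log (1 + t) - Real.log (1 - t) := by
  set f : ℝ → ℝ := fun x => Real.log (1 + x) - Real.log (1 - x) - 2 * x with hf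
  have hmono : StrictMonoOn f (Set.Icc 0 t) := by
    apply strictMonoOn_of_deriv_pos (convex_Icc 0 t)
    · apply ContinuousOn.sub (ContinuousOn.sub ?_ ?_) (by fun_prop)
      · apply ContinuousOn.log (by fun_prop)
        intro x hx; simp only [Set.mem_Icc] at hx; nlinarith [hx.1]
      · apply ContinuousOn.log (by fun_prop)
        intro x hx; simp only [Set.mem_Icc] at hx; nlinarith [hx.2]
    · intro x hx
      rw [interior_Icc, Set.mem_Ioo] at hx
      have h1 : (0:ℝ) < 1 + x := by nlinarith [hx.1]
      have h2 : (0:ℝ) < 1 - x := by nlinarith [hx.2]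
      have hd : HasDerivAt f (1 / (1 + x) - (-1) / (1 - x) - 2) x := by
        have d1 : HasDerivAt (fun x : ℝ => Real.log (1 + x)) (1 / (1 + x)) x := by
          simpa using ((hasDerivAt_id x).const_add 1).log h1.ne'
        have d2 : HasDerivAt (fun x : ℝ => Real.log (1 - x)) ((-1) / (1 - x)) x := by
          simpa [sub_eq_add_neg] using (((hasDerivAt_id x).neg).const_add 1).log h2.ne'
        simpa using (d1.fun_sub d2).fun_sub ((hasDerivAt_id x).const_mul 2)
      rw [hd.deriv]
      rw [div_sub_div _ _ h1.ne' h2.ne']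
      have : (0:ℝ) < (1 + x) * (1 - x) := by positivity
      rw [sub_pos, lt_div_iff₀ this]
      nlinarith [hx.1]
  have h0 : f 0 < f t := by
    apply hmono (by simp [ht0.le]) (by simp [ht0.le]) ht0
  simp only [hf] at h0
  simp at h0
  linarith
lemma a_strictAnti : StrictAnti (fun n : ℕ => H n - Real.log (n + 1 / 2)) := by
  apply strictAnti_nat_of_succ_lt
  intro n
  have key := key_log (1 / (2 * (n + 1))) (by positivity) (by
    rw [div_lt_one (by positivity)]; nlinarith [Nat.cast_nonneg (α := ℝ) n])
  have hn2 : (0:ℝ) < (n:ℝ) + 1 := by positivity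
  have e1 : Real.log (1 + 1 / (2 * ((n:ℝ) + 1))) = Real.log ((n:ℝ) + 1 + 1/2) - Real.log ((n:ℝ)+1) := by
    rw [← Real.log_div (by positivity) (by positivity)]
    congr 1; field_simp
  have e2 : Real.log (1 - 1 / (2 * ((n:ℝ) + 1))) = Real.log ((n:ℝ) + 1/2) - Real.log ((n:ℝ)+1) := by
    rw [← Real.log_div (by positivity) (by positivity)]
    congr 1; field_simp; ring
  rw [e1, e2] at key
  have hH : H (n + 1) = H n + 1 / ((n:ℝ) + 1) := by
    simp [H, Finset.sum_range_succ]
  push_cast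
  rw [hH]
  have : (1:ℝ) / ((n:ℝ) + 1) = 2 * (1 / (2 * ((n:ℝ) + 1))) := by rw [mul_one_div, div_eq_div_iff (by positivity) (by positivity)]; ring
  rw [this]
  linarith
lemma a_tendsto : Tendsto (fun n : ℕ => H n - Real.log (n + 1 / 2)) atTop
    (nhds Real.eulerMascheroniConstant) := by
  have h1 := Real.tendsto_harmonic_sub_log
  have h2 : Tendsto (fun n : ℕ => Real.log ((n : ℝ) + 1/2) - Real.log n) atTop (nhds 0) := by
    have : Tendsto (fun x : ℝ => Real.log (x + 1/2) - Real.log x) atTop (nhds 0) := by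
      have key : Tendsto (fun x : ℝ => Real.log (1 + (1/2) / x)) atTop (nhds 0) := by
        simpa using ((tendsto_const_nhds.div_atTop tendsto_id).const_add 1).log (by norm_num)
      apply key.congr'
      filter_upwards [eventually_gt_atTop 0] with x hx
      rw [← Real.log_div (by positivity) (by positivity)]
      congr 1; field_simp
    exact this.comp tendsto_natCast_atTop_atTop
  have := h1.sub h2
  rw [sub_zero] at this
  apply this.congr'
  filter_upwards [eventually_gt_atTop 0] with n hn
  have : ((harmonic n : ℝ)) = H n := by
    simp [H, harmonic]
  rw [← this]; ring

theorem stmt19 (n : ℕ) (hn : 1 ≤ n) :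
    0 < H n - (1 / 2) * Real.log (n * (n + 1)) - Real.eulerMascheroniConstant ∧
    0 < H n - Real.log (n + 1 / 2) - Real.eulerMascheroniConstant := by
  have h2 : 0 < H n - Real.log (n + 1 / 2) - Real.eulerMascheroniConstant := by
    have hle : Real.eulerMascheroniConstant ≤ H (n+1) - Real.log ((n+1 : ℕ) + 1 / 2) :=
      a_strictAnti.antitone.le_of_tendsto a_tendsto (n+1)
    have hlt := a_strictAnti (Nat.lt_succ_self n)
    simp only at hlt
    linarith
  refine ⟨?_, h2⟩
  have hn' : (1:ℝ) ≤ n := by exact_mod_cast hn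
  have hlog : (1/2) * Real.log ((n:ℝ) * (n + 1)) < Real.log ((n:ℝ) + 1/2) := by
    have h : Real.log ((n:ℝ) * (n+1)) < Real.log (((n:ℝ) + 1/2)^2) := by
      apply Real.log_lt_log (by nlinarith)
      nlinarith
    rw [Real.log_pow] at h
    push_cast at h
    linarith
  linarith
end
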